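/- The maximum over x ∈ [0,1] of ∫₀¹ |G_1(x,s)| ds equals 1/24, where G_1(x,s) = (1/6)·s(3x²-6x+s²+2) for 0 ≤ s ≤ x ≤ 1 and G_1(x,s) = (1/6)·(s-1)(3x²-2s+s²) for 0 ≤ x ≤ s ≤ 1. -/
import Mathlib

open Set intervalIntegral

noncomputable def G1 (x s : ℝ) : ℝ :=
  if s ≤ x then (1/6) * (s * (3*x^2 - 6*x + s^2 + 2))
  else (1/6) * ((s - 1) * (3*x^2 - 2*s + s^2))

lemma cubic_int (a b c0 c1 c2 c3 : ℝ) :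
    ∫ s in a..b, (c3*s^3 + c2*s^2 + c1*s + c0) =
      c3*(b^4-a^4)/4 + c2*(b^3-a^3)/3 + c1*(b^2-a^2)/2 + c0*(b-a) := by
  have h : ∀ s ∈ uIcc a b, HasDerivAt (fun s : ℝ => c3*s^4/4 + c2*s^3/3 + c1*s^2/2 + c0*s)
      (c3*s^3 + c2*s^2 + c1*s + c0) s := by
    intro s _
    have : HasDerivAt (fun s : ℝ => c3*s^4/4 + c2*s^3/3 + c1*s^2/2 + c0*s)
        (c3*(4*s^3)/4 + c2*(3*s^2)/3 + c1*(2*s^1)/2 + c0*1) s := by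
      apply HasDerivAt.add
      apply HasDerivAt.add
      apply HasDerivAt.add
      · exact ((hasDerivAt_pow 4 s).const_mul c3).div_const 4
      · exact ((hasDerivAt_pow 3 s).const_mul c2).div_const 3
      · exact ((hasDerivAt_pow 2 s).const_mul c1).div_const 2
      · exact (hasDerivAt_id s).const_mul c0
    convert this using 1; ring
  rw [integral_eq_sub_of_hasDerivAt h (by apply Continuous.intervalIntegrable; continuity)]
  ring

lemma contG1 (x : ℝ) : Continuous (fun s => G1 x s) := by
  unfold G1
  apply Continuous.if_le (by continuity) (by continuity) continuous_id continuous_const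
  intro s hs
  simp only [id_eq] at hs ⊢
  subst hs; ring

lemma intble (x a b : ℝ) : IntervalIntegrable (fun s => |G1 x s|) MeasureTheory.volume a b :=
  ((contG1 x).abs).intervalIntegrable _ _

lemma G1_left {x s : ℝ} (h : s ≤ x) : G1 x s = (1/6) * (s * (3*x^2 - 6*x + s^2 + 2)) :=
  if_pos h

lemma G1_right {x s : ℝ} (h : x ≤ s) : G1 x s = (1/6) * ((s - 1) * (3*x^2 - 2*s + s^2)) := by
  unfold G1; split_ifs with h'
  · have hxs : s = x := le_antisymm h' h
    subst hxs; ring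
  · rfl

set_option maxHeartbeats 1000000 in
lemma upperB (x : ℝ) (hx0 : 0 ≤ x) (hx1 : x ≤ 1) :
    (∫ s in (0:ℝ)..1, |G1 x s|) ≤ 1/24 := by
  rcases le_or_gt 0 (3*x^2 - 6*x + 2) with hc | hc
  · -- Case 1 : c ≥ 0, both pieces nonneg
    have hx2 : x ≤ 1/2 := by nlinarith [mul_nonneg (sub_nonneg.2 hx1) (sub_nonneg.2 hx1)]
    have e1 : EqOn (fun s => |G1 x s|)
        (fun s => (1/6:ℝ)*s^3 + 0*s^2 + ((3*x^2-6*x+2)/6)*s + 0) (uIcc 0 x) := by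
      rw [uIcc_of_le hx0]
      intro s hs
      simp only
      rw [G1_left hs.2, abs_of_nonneg (by nlinarith [hs.1, hs.2, mul_nonneg hs.1 hs.1])]
      ring
    have e2 : EqOn (fun s => |G1 x s|)
        (fun s => (1/6:ℝ)*s^3 + (-1/2)*s^2 + ((3*x^2+2)/6)*s + (-(x^2)/2)) (uIcc x 1) := by
      rw [uIcc_of_le hx1]
      intro s hs
      simp only
      have hq : s^2 - 2*s + 3*x^2 ≤ 0 := by
        nlinarith [mul_nonneg (sub_nonneg.2 hs.1) (sub_nonneg.2 hs.2),
          mul_nonneg (sub_nonneg.2 hs.1) (sub_nonneg.2 hx1),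
          mul_nonneg hx0 (by linarith : (0:ℝ) ≤ 1 - 2*x)]
      rw [G1_right hs.1, abs_of_nonneg (by nlinarith [hs.2])]
      ring
    rw [← integral_add_adjacent_intervals (intble x 0 x) (intble x x 1),
      integral_congr e1, integral_congr e2, cubic_int, cubic_int]
    nlinarith [mul_nonneg (mul_nonneg hx0 hx0) (sub_nonneg.2 hx1)]
  · rcases le_or_gt x (1/2) with hx2 | hx2
    · -- Case 2 : c < 0, x ≤ 1/2
      set a := Real.sqrt (-(3*x^2 - 6*x + 2)) with ha_def
      have ha0 : 0 ≤ a := Real.sqrt_nonneg _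
      have ha2 : a^2 = -(3*x^2 - 6*x + 2) := Real.sq_sqrt (by linarith)
      have ha4 : a^4 = (3*x^2 - 6*x + 2)^2 := by
        rw [show a^4 = (a^2)^2 by ring, ha2]; ring
      have hax : a ≤ x := by
        have h1 : a ≤ Real.sqrt (x^2) := Real.sqrt_le_sqrt (by nlinarith [mul_nonneg (by linarith : (0:ℝ) ≤ 1 - 2*x) (sub_nonneg.2 hx1)])
        rwa [Real.sqrt_sq hx0] at h1
      have e1 : EqOn (fun s => |G1 x s|)
          (fun s => (-1/6:ℝ)*s^3 + 0*s^2 + (-(3*x^2-6*x+2)/6)*s + 0) (uIcc 0 a) := by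
        rw [uIcc_of_le ha0]
        intro s hs
        simp only
        have hss : s^2 ≤ a^2 := by nlinarith [hs.1, hs.2]
        rw [G1_left (le_trans hs.2 hax), abs_of_nonpos (by nlinarith [hs.1])]
        ring
      have e2 : EqOn (fun s => |G1 x s|)
          (fun s => (1/6:ℝ)*s^3 + 0*s^2 + ((3*x^2-6*x+2)/6)*s + 0) (uIcc a x) := by
        rw [uIcc_of_le hax]
        intro s hs
        simp only
        have hss : a^2 ≤ s^2 := by nlinarith [hs.1, ha0]
        rw [G1_left hs.2, abs_of_nonneg (by nlinarith [hs.1, ha0])]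
        ring
      have e3 : EqOn (fun s => |G1 x s|)
          (fun s => (1/6:ℝ)*s^3 + (-1/2)*s^2 + ((3*x^2+2)/6)*s + (-(x^2)/2)) (uIcc x 1) := by
        rw [uIcc_of_le hx1]
        intro s hs
        simp only
        have hq : s^2 - 2*s + 3*x^2 ≤ 0 := by
          nlinarith [mul_nonneg (sub_nonneg.2 hs.1) (sub_nonneg.2 hs.2),
            mul_nonneg (sub_nonneg.2 hs.1) (sub_nonneg.2 hx1),
            mul_nonneg hx0 (by linarith : (0:ℝ) ≤ 1 - 2*x)]
        rw [G1_right hs.1, abs_of_nonneg (by nlinarith [hs.2])]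
        ring
      have hcross : x^2 * a^2 = x^2 * (-(3*x^2 - 6*x + 2)) := by rw [ha2]
      have hP : (0:ℝ) ≤ -9*x^4 + 34*x^3 - 45*x^2 + 24*x - 4 := by
        nlinarith [mul_nonneg (by linarith : (0:ℝ) ≤ 1 - 2*x)
            (by linarith : (0:ℝ) ≤ -(3*x^2 - 6*x + 2)),
          mul_nonneg hx0 (by linarith : (0:ℝ) ≤ 1 - 2*x),
          sq_nonneg x, sq_nonneg (1 - 2*x), sq_nonneg (3*x^2 - 6*x + 2),
          mul_nonneg hx0 hx0, hx0, hc.le]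
      rw [← integral_add_adjacent_intervals (intble x 0 x) (intble x x 1),
        ← integral_add_adjacent_intervals (intble x 0 a) (intble x a x),
        integral_congr e1, integral_congr e2, integral_congr e3,
        cubic_int, cubic_int, cubic_int]
      nlinarith [hP, ha2, ha4, hcross]
    · -- x > 1/2
      have e1 : EqOn (fun s => |G1 x s|)
          (fun s => (-1/6:ℝ)*s^3 + 0*s^2 + (-(3*x^2-6*x+2)/6)*s + 0) (uIcc 0 x) := by
        rw [uIcc_of_le hx0]
        intro s hs
        simp only
        have hss : s^2 ≤ x^2 := by nlinarith [hs.1, hs.2]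
        have hxx : 4*x^2 - 6*x + 2 ≤ 0 := by
          nlinarith [mul_nonneg (by linarith : (0:ℝ) ≤ 2*x - 1) (sub_nonneg.2 hx1)]
        rw [G1_left hs.2, abs_of_nonpos (by nlinarith [hs.1])]
        ring
      rcases le_or_gt (3*x^2) 1 with h3 | h3
      · -- Case 3 : 1/2 < x, 3x² ≤ 1
        obtain ⟨t, ht0, ht2⟩ : ∃ t : ℝ, 0 ≤ t ∧ t^2 = 1 - 3*x^2 :=
          ⟨Real.sqrt (1 - 3*x^2), Real.sqrt_nonneg _, Real.sq_sqrt (by linarith)⟩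
        have ht4 : t^4 = (1 - 3*x^2)^2 := by
          rw [show t^4 = (t^2)^2 by ring, ht2]
        have hcross : x^2 * t^2 = x^2 * (1 - 3*x^2) := by rw [ht2]
        have hxlt : x < 1 := by nlinarith
        have htx : x ≤ 1 - t := by
          by_contra hcon
          push_neg at hcon
          nlinarith [ht2, mul_pos (by linarith : (0:ℝ) < t - (1-x))
            (by linarith : (0:ℝ) < t + (1-x))]
        have ht1 : 1 - t ≤ 1 := by linarith
        have e2 : EqOn (fun s => |G1 x s|)
            (fun s => (-1/6:ℝ)*s^3 + (1/2)*s^2 + (-(3*x^2+2)/6)*s + (x^2/2)) (uIcc x (1-t)) := by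
          rw [uIcc_of_le htx]
          intro s hs
          simp only
          have hq : 0 ≤ s^2 - 2*s + 3*x^2 := by
            nlinarith [mul_nonneg (by linarith [hs.2] : (0:ℝ) ≤ 1 - t - s)
              (by linarith [hs.2] : (0:ℝ) ≤ 1 + t - s), ht2]
          rw [G1_right hs.1, abs_of_nonpos (by nlinarith [hs.2, ht0])]
          ring
        have e3 : EqOn (fun s => |G1 x s|)
            (fun s => (1/6:ℝ)*s^3 + (-1/2)*s^2 + ((3*x^2+2)/6)*s + (-(x^2)/2)) (uIcc (1-t) 1) := by
          rw [uIcc_of_le ht1]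
          intro s hs
          simp only
          have hq : s^2 - 2*s + 3*x^2 ≤ 0 := by
            nlinarith [mul_nonneg (by linarith [hs.1] : (0:ℝ) ≤ s - (1 - t))
              (sub_nonneg.2 hs.2), ht2, mul_nonneg (sub_nonneg.2 hs.2) ht0]
          rw [G1_right (le_trans htx hs.1), abs_of_nonneg (by nlinarith [hs.2])]
          ring
        rw [← integral_add_adjacent_intervals (intble x 0 x) (intble x x 1),
          ← integral_add_adjacent_intervals (intble x x (1-t)) (intble x (1-t) 1),
          integral_congr e1, integral_congr e2, integral_congr e3,
          cubic_int, cubic_int, cubic_int]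
        nlinarith [ht2, ht4, hcross, mul_nonneg (mul_nonneg hx0 hx0) hx0,
          mul_nonneg (mul_nonneg hx0 hx0) (by linarith : (0:ℝ) ≤ 1 - 3*x^2)]
      · -- Case 4 : 1/2 < x, 3x² > 1
        have e2 : EqOn (fun s => |G1 x s|)
            (fun s => (-1/6:ℝ)*s^3 + (1/2)*s^2 + (-(3*x^2+2)/6)*s + (x^2/2)) (uIcc x 1) := by
          rw [uIcc_of_le hx1]
          intro s hs
          simp only
          have hq : 0 ≤ s^2 - 2*s + 3*x^2 := by nlinarith [sq_nonneg (s-1)]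
          rw [G1_right hs.1, abs_of_nonpos (by nlinarith [hs.2])]
          ring
        rw [← integral_add_adjacent_intervals (intble x 0 x) (intble x x 1),
          integral_congr e1, integral_congr e2, cubic_int, cubic_int]
        nlinarith [mul_nonneg (mul_nonneg (sub_nonneg.2 hx1) (sub_nonneg.2 hx1))
          (by linarith : (0:ℝ) ≤ 2*x + 1)]

theorem stmt_2 :
    IsGreatest {y : ℝ | ∃ x ∈ Icc (0:ℝ) 1, y = ∫ s in (0:ℝ)..1, |G1 x s|} (1/24) := by
  constructor
  · refine ⟨0, ⟨le_refl 0, zero_le_one⟩, ?_⟩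
    have e : EqOn (fun s => |G1 0 s|)
        (fun s => (1/6:ℝ)*s^3 + (-1/2)*s^2 + (1/3)*s + 0) (uIcc 0 1) := by
      rw [uIcc_of_le zero_le_one]
      intro s hs
      simp only
      rw [G1_right hs.1, abs_of_nonneg (by nlinarith [hs.1, hs.2, mul_nonneg hs.1 (sub_nonneg.2 hs.2)])]
      ring
    rw [integral_congr e, cubic_int]
    norm_num
  · rintro y ⟨x, hx, rfl⟩
    exact upperB x hx.1 hx.2
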